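/- Let t < k be positive integers, 2 ≤ v_1 ≤ ⋯ ≤ v_k, and let d < v_1 be a nonnegative integer. Suppose there exists a super-simple MCA_{d+1}(N; t, k, (v_1,…,v_k)) of optimum size N = (d+1)·∏_{i=k−t+1}^k v_i, and suppose an orthogonal array OA(t+1, k+1, m) exists for some integer m ≥ 2. Then for every integer λ with 2 ≤ λ ≤ m there exists a (λ(d+1)−1, t)-DTA(λ·m^t·N; k, (mv_1, mv_2,…, mv_k)) of optimum size λ·m^t·N meeting the lower bound (λ(d+1))·∏_{i=k−t+1}^k (m v_i). -/

import Mathlib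

open Finset


/-- An array `A` (rows indexed by `R`, columns by `J`) is of type `v` if every
entry in column `j` lies in `Z_{v j} = {0, 1, …, v j - 1}`. -/
def IsArray {R J : Type*} (v : J → ℕ) (A : R → J → ℕ) : Prop :=
  ∀ r j, A r j < v j

/-- An `s`-way interaction: a set of `s` pairs `(j, σ)` with pairwise distinct
column indices `j` and value `σ ∈ Z_{v j}`. -/
def IsInteraction {J : Type*} [DecidableEq J] (v : J → ℕ) (s : ℕ)
    (T : Finset (J × ℕ)) : Prop :=
  T.card = s ∧ (T.image Prod.fst).card = s ∧ ∀ p ∈ T, p.2 < v p.1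

/-- `rho A T`: the set of rows of `A` in which the interaction `T` is covered. -/
def rho {R J : Type*} [Fintype R] (A : R → J → ℕ) (T : Finset (J × ℕ)) :
    Finset R :=
  Finset.univ.filter fun r => ∀ p ∈ T, A r p.1 = p.2

/-- `rhoSet A 𝒯 = ⋃_{T ∈ 𝒯} rho A T`. -/
def rhoSet {R J : Type*} [Fintype R] [DecidableEq R] (A : R → J → ℕ)
    (Ts : Finset (Finset (J × ℕ))) : Finset R :=
  Ts.sup (rho A)

/-- A `(d,t)`-detecting array of type `v`: for every `t`-way interaction `T` and
every set `𝒯` of exactly `d` `t`-way interactions,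
`ρ(A,T) ⊆ ρ(A,𝒯) ↔ T ∈ 𝒯`. -/
def IsDTA {R J : Type*} [Fintype R] [DecidableEq R] [DecidableEq J] (v : J → ℕ) (d t : ℕ)
    (A : R → J → ℕ) : Prop :=
  IsArray v A ∧
    ∀ T : Finset (J × ℕ), IsInteraction v t T →
      ∀ Ts : Finset (Finset (J × ℕ)), Ts.card = d →
        (∀ T' ∈ Ts, IsInteraction v t T') →
          (rho A T ⊆ rhoSet A Ts ↔ T ∈ Ts)

/-- A mixed covering array `MCA_λ(N; t, k, v)`: an array of type `v` such that
`|ρ(A,T)| ≥ λ` for every `t`-way interaction `T`. -/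
def IsMCA {R J : Type*} [Fintype R] [DecidableEq J] (v : J → ℕ) (lam t : ℕ)
    (A : R → J → ℕ) : Prop :=
  IsArray v A ∧ ∀ T : Finset (J × ℕ), IsInteraction v t T → lam ≤ (rho A T).card

/-- Super-simple of strength `t`: every `(t+1)`-way interaction is covered by at
most one row. -/
def IsSuperSimple {R J : Type*} [Fintype R] [DecidableEq J] (v : J → ℕ) (t : ℕ)
    (A : R → J → ℕ) : Prop :=
  ∀ T : Finset (J × ℕ), IsInteraction v (t + 1) T → (rho A T).card ≤ 1

/-- An orthogonal array `OA_λ(t, k, v)`: all entries in `Z_v` and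
`|ρ(A,T)| = λ` for every `t`-way interaction `T`. (The size requirement
`N = λ·v^t` is imposed on the row-index type in the statements.) -/
def IsOA {R J : Type*} [Fintype R] [DecidableEq J] (vlev lam t : ℕ)
    (A : R → J → ℕ) : Prop :=
  IsArray (fun _ : J => vlev) A ∧
    ∀ T : Finset (J × ℕ), IsInteraction (fun _ : J => vlev) t T →
      (rho A T).card = lam

/-- `Te` is an extension of the interaction `T`: it is obtained from `T` by
adjoining one pair `(j, σ)` with `σ ∈ Z_{v j}` whose column index `j` occurs in
no pair of `T`. -/
def IsExtension {J : Type*} [DecidableEq J] (v : J → ℕ)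
    (T Te : Finset (J × ℕ)) : Prop :=
  ∃ p : J × ℕ, p.2 < v p.1 ∧ (∀ q ∈ T, q.1 ≠ p.1) ∧ Te = insert p T

/-- `A` is `d`-extendible (with respect to strength `t`): for every `t`-way
interaction `T` and every list of `d` extensions `T_1, …, T_d` of `T`
(repetitions allowed), `ρ(A,T) \ (ρ(A,T_1) ∪ ⋯ ∪ ρ(A,T_d))` is nonempty. -/
def IsExtendible {R J : Type*} [Fintype R] [DecidableEq J] (v : J → ℕ)
    (d t : ℕ) (A : R → J → ℕ) : Prop :=
  ∀ T : Finset (J × ℕ), IsInteraction v t T →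
    ∀ Te : Fin d → Finset (J × ℕ), (∀ i, IsExtension v T (Te i)) →
      ∃ r ∈ rho A T, ∀ i, r ∉ rho A (Te i)

lemma mem_rho {R J : Type*} [Fintype R] {A : R → J → ℕ} {T : Finset (J × ℕ)} {r : R} :
    r ∈ rho A T ↔ ∀ p ∈ T, A r p.1 = p.2 := by
  simp [rho]

lemma card_filter_equiv {α β : Type*} [Fintype α] [Fintype β] (e : α ≃ β)
    (P : β → Prop) [DecidablePred P] :
    (univ.filter (fun a => P (e a))).card = (univ.filter P).card := by
  apply Finset.card_bij (fun a _ => e a)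
  · intro a ha; simp_all
  · intro a _ b _ h; exact e.injective h
  · intro b hb; exact ⟨e.symm b, by simp_all, by simp⟩

lemma card_filter_subtype {α : Type*} [Fintype α] [DecidableEq α] (S : Finset α)
    (P : α → Prop) [DecidablePred P] :
    (univ.filter (fun x : ↥S => P ↑x)).card = (S.filter P).card := by
  refine Finset.card_bij (fun (a : ↥S) _ => (a : α)) ?_ ?_ ?_
  · intro a ha; simp only [Finset.mem_filter, Finset.mem_univ, true_and] at ha
    exact Finset.mem_filter.mpr ⟨a.2, ha⟩
  · intro a _ b _ h; exact Subtype.ext h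
  · intro b hb; simp at hb; exact ⟨⟨b, hb.1⟩, by simp [hb.2], rfl⟩

lemma fst_injOn {J : Type*} [DecidableEq J] {v : J → ℕ} {s : ℕ} {T : Finset (J × ℕ)}
    (hT : IsInteraction v s T) : Set.InjOn Prod.fst (T : Set (J × ℕ)) := by
  rw [← Finset.card_image_iff]; rw [hT.2.1, hT.1]

lemma interaction_image {J J' : Type*} [DecidableEq J] [DecidableEq J']
    (v : J → ℕ) (v' : J' → ℕ) (g : J → J') (hg : Function.Injective g)
    (h : J × ℕ → ℕ) {s : ℕ} {T : Finset (J × ℕ)}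
    (hT : IsInteraction v s T) (hh : ∀ p ∈ T, h p < v' (g p.1)) :
    IsInteraction v' s (T.image (fun p => (g p.1, h p))) := by
  have hfst := fst_injOn hT
  have hinj : Set.InjOn (fun p : J × ℕ => (g p.1, h p)) (T : Set (J × ℕ)) := by
    intro p hp q hq hpq
    simp only [Prod.mk.injEq] at hpq
    exact hfst hp hq (hg hpq.1)
  refine ⟨?_, ?_, ?_⟩
  · rw [Finset.card_image_of_injOn hinj, hT.1]
  · rw [Finset.image_image]
    have : (Prod.fst ∘ fun p : J × ℕ => (g p.1, h p)) = g ∘ Prod.fst := rfl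
    rw [this, ← Finset.image_image, Finset.card_image_of_injective _ hg, hT.2.1]
  · intro p hp
    simp only [Finset.mem_image] at hp
    obtain ⟨q, hq, rfl⟩ := hp
    exact hh q hq

lemma oa_rho_card {n K m w : ℕ} {D : Fin n → Fin K → ℕ} (hOA : IsOA m 1 w D)
    (hwK : w ≤ K) :
    ∀ c s, s + c = w → ∀ T : Finset (Fin K × ℕ),
      IsInteraction (fun _ => m) s T → (rho D T).card = m ^ c := by
  intro c
  induction c with
  | zero =>
    intro s hs T hT
    subst hs; simpa using hOA.2 T hT
  | succ c ih =>
    intro s hs T hT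
    have hcard : (T.image Prod.fst).card < K := by
      rw [hT.2.1]; omega
    have huniv : T.image Prod.fst ≠ univ := by
      intro h; rw [h] at hcard; simp at hcard
    obtain ⟨j, hj⟩ : ∃ j : Fin K, j ∉ T.image Prod.fst := by
      by_contra h; push_neg at h
      exact huniv (Finset.eq_univ_of_forall h)
    have hins : ∀ σ, σ < m → IsInteraction (fun _ : Fin K => m) (s+1) (insert (j, σ) T) := by
      intro σ hσ
      have hjT : (j, σ) ∉ T := fun h => hj (Finset.mem_image_of_mem _ h)
      refine ⟨by rw [Finset.card_insert_of_notMem hjT, hT.1], ?_, ?_⟩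
      · rw [Finset.image_insert]
        rw [Finset.card_insert_of_notMem hj, hT.2.1]
      · intro p hp
        rcases Finset.mem_insert.mp hp with h | h
        · subst h; exact hσ
        · exact hT.2.2 p h
    have hpart : rho D T = (Finset.range m).biUnion
        (fun σ => rho D (insert (j, σ) T)) := by
      ext r
      simp only [Finset.mem_biUnion, Finset.mem_range, mem_rho]
      constructor
      · intro hr
        refine ⟨D r j, hOA.1 r j, ?_⟩
        intro p hp
        rcases Finset.mem_insert.mp hp with h | h
        · subst h; rfl
        · exact hr p h
      · rintro ⟨σ, _, hr⟩
        exact fun p hp => hr p (Finset.mem_insert_of_mem hp)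
    rw [hpart, Finset.card_biUnion]
    · have : ∀ σ ∈ Finset.range m, (rho D (insert (j, σ) T)).card = m ^ c := by
        intro σ hσ
        exact ih (s+1) (by omega) _ (hins σ (Finset.mem_range.mp hσ))
      rw [Finset.sum_congr rfl this, Finset.sum_const, Finset.card_range]
      ring
    · intro x hx y hy hxy
      rw [Function.onFun, Finset.disjoint_left]
      intro r hr hr'
      rw [mem_rho] at hr hr'
      have h1 := hr (j, x) (Finset.mem_insert_self _ _)
      have h2 := hr' (j, y) (Finset.mem_insert_self _ _)
      simp only at h1 h2; omega

/-- STATEMENT 13 (Corollary: from a super-simple `MCA_{d+1}` of optimum size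
`N = (d+1)·∏_{i=k-t+1}^k v_i` and an `OA(t+1, k+1, m)`, for every
`2 ≤ λ ≤ m` there is a `(λ(d+1)-1, t)`-DTA of optimum size `λ·m^t·N` on levels
`(m v_1, …, m v_k)` meeting the lower bound). -/
theorem stmt_13 {t k d N m : ℕ} (ht : 0 < t) (hk : 0 < k) (htk : t < k)
    (v : Fin k → ℕ) (hmono : Monotone v) (hv2 : 2 ≤ v ⟨0, hk⟩)
    (hdv : d < v ⟨0, hk⟩) (hm : 2 ≤ m)
    (hN : N = (d + 1) * ∏ i ∈ Finset.univ.filter (fun i : Fin k => k - t ≤ (i : ℕ)), v i)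
    (hMCA : ∃ A : Fin N → Fin k → ℕ, IsMCA v (d + 1) t A ∧ IsSuperSimple v t A)
    (hOA : ∃ D : Fin (m ^ (t + 1)) → Fin (k + 1) → ℕ, IsOA m 1 (t + 1) D) :
    ∀ lam : ℕ, 2 ≤ lam → lam ≤ m →
      ∃ C : Fin (lam * m ^ t * N) → Fin k → ℕ,
        IsDTA (fun j => m * v j) (lam * (d + 1) - 1) t C := by
  obtain ⟨A, hA, hSS⟩ := hMCA
  obtain ⟨D, hD⟩ := hOA
  intro lam hl2 hlm
  have hv0 : ∀ j : Fin k, 0 < v j := by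
    intro j
    have : v ⟨0, hk⟩ ≤ v j := hmono (by simp [Fin.le_def])
    omega
  -- the selected rows of the OA
  set S : Finset (Fin (m ^ (t+1))) :=
    univ.filter (fun x => D x (Fin.last k) < lam) with hS
  -- cardinality of S
  have hcardS : S.card = lam * m ^ t := by
    have hpart : S = (Finset.range lam).biUnion
        (fun c => rho D {(Fin.last k, c)}) := by
      ext x
      simp only [hS, Finset.mem_filter, Finset.mem_univ, true_and,
        Finset.mem_biUnion, Finset.mem_range, mem_rho, Finset.mem_singleton]
      constructor
      · intro hx
        exact ⟨D x (Fin.last k), hx, by rintro p rfl; rfl⟩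
      · rintro ⟨c, hc, hcov⟩
        have := hcov (Fin.last k, c) rfl
        simp only at this; omega
    rw [hpart, Finset.card_biUnion]
    · have h1 : ∀ c ∈ Finset.range lam,
          (rho D ({(Fin.last k, c)} : Finset (Fin (k+1) × ℕ))).card = m ^ t := by
        intro c hc
        refine oa_rho_card hD (by omega) t 1 (by omega) _ ?_
        refine ⟨by simp, by simp, ?_⟩
        intro p hp
        simp only [Finset.mem_singleton] at hp
        subst hp
        simp only
        exact lt_of_lt_of_le (Finset.mem_range.mp hc) hlm
      rw [Finset.sum_congr rfl h1, Finset.sum_const, Finset.card_range, smul_eq_mul]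
    · intro x hx y hy hxy
      rw [Function.onFun, Finset.disjoint_left]
      intro r hr hr'
      rw [mem_rho] at hr hr'
      have h1 := hr (Fin.last k, x) (Finset.mem_singleton_self _)
      have h2 := hr' (Fin.last k, y) (Finset.mem_singleton_self _)
      simp only at h1 h2; omega
  have hcardProd : Fintype.card (↥S × Fin N) = lam * m ^ t * N := by
    simp [Fintype.card_prod, Fintype.card_coe, hcardS]
  let e : Fin (lam * m ^ t * N) ≃ ↥S × Fin N :=
    (Fintype.equivFinOfCardEq hcardProd).symm
  -- the constructed array
  set C : Fin (lam * m ^ t * N) → Fin k → ℕ :=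
    fun r j => v j * D ((e r).1 : Fin (m ^ (t+1))) j.castSucc + A (e r).2 j with hCdef
  -- column maps
  set fD : Fin k × ℕ → Fin (k+1) × ℕ :=
    fun p => (p.1.castSucc, p.2 / v p.1) with hfD
  set fA : Fin k × ℕ → Fin k × ℕ := fun p => (p.1, p.2 % v p.1) with hfA
  -- membership in rho C T in terms of the factors
  have hmem : ∀ (T : Finset (Fin k × ℕ)) (r : Fin (lam * m ^ t * N)),
      (r ∈ rho C T ↔ ((e r).1 : Fin (m ^ (t+1))) ∈ rho D (T.image fD) ∧
        (e r).2 ∈ rho A (T.image fA)) := by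
    intro T r
    simp only [mem_rho]
    constructor
    · intro hr
      constructor
      · intro q hq
        obtain ⟨p, hp, rfl⟩ := Finset.mem_image.mp hq
        have h1 := hr p hp
        simp only [hCdef] at h1
        simp only [hfD]
        have h2 : p.2 / v p.1 = D ((e r).1 : Fin (m ^ (t+1))) p.1.castSucc +
            A (e r).2 p.1 / v p.1 := by
          rw [← h1, Nat.mul_add_div (hv0 p.1)]
        rw [h2, Nat.div_eq_of_lt (hA.1 (e r).2 p.1)]
        omega
      · intro q hq
        obtain ⟨p, hp, rfl⟩ := Finset.mem_image.mp hq
        have h1 := hr p hp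
        simp only [hCdef] at h1
        simp only [hfA]
        have h2 : p.2 % v p.1 = A (e r).2 p.1 % v p.1 := by
          rw [← h1, Nat.mul_add_mod]
        rw [h2, Nat.mod_eq_of_lt (hA.1 (e r).2 p.1)]
    · rintro ⟨h1, h2⟩ p hp
      have hd := h1 (fD p) (Finset.mem_image_of_mem _ hp)
      have ha := h2 (fA p) (Finset.mem_image_of_mem _ hp)
      simp only [hfD] at hd
      simp only [hfA] at ha
      simp only [hCdef]
      rw [hd, ha, Nat.div_add_mod]
  -- cardinality of rho C T as a product
  have hcardrho : ∀ T : Finset (Fin k × ℕ),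
      (rho C T).card = (S.filter (fun x => x ∈ rho D (T.image fD))).card *
        (rho A (T.image fA)).card := by
    intro T
    have h1 : (rho C T).card =
        ((univ.filter (fun x : ↥S => ↑x ∈ rho D (T.image fD))) ×ˢ
          (rho A (T.image fA))).card := by
      refine Finset.card_bij' (fun r _ => e r) (fun p _ => e.symm p) ?_ ?_ ?_ ?_
      · intro r hr
        rw [Finset.mem_product, Finset.mem_filter]
        have h := (hmem T r).mp hr
        exact ⟨⟨Finset.mem_univ _, h.1⟩, h.2⟩
      · intro p hp
        rw [Finset.mem_product, Finset.mem_filter] at hp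
        apply (hmem T (e.symm p)).mpr
        rw [Equiv.apply_symm_apply]
        exact ⟨hp.1.2, hp.2⟩
      · intro r _; exact e.symm_apply_apply r
      · intro p _; exact e.apply_symm_apply p
    rw [h1, Finset.card_product,
      card_filter_subtype S (fun x => x ∈ rho D (T.image fD))]
  -- image interactions
  have hTD : ∀ s (T : Finset (Fin k × ℕ)), IsInteraction (fun j => m * v j) s T →
      IsInteraction (fun _ : Fin (k+1) => m) s (T.image fD) := by
    intro s T hT
    refine interaction_image _ _ Fin.castSucc (Fin.castSucc_injective k) _ hT ?_
    intro p hp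
    exact (Nat.div_lt_iff_lt_mul (hv0 p.1)).mpr (hT.2.2 p hp)
  have hTA : ∀ s (T : Finset (Fin k × ℕ)), IsInteraction (fun j => m * v j) s T →
      IsInteraction v s (T.image fA) := by
    intro s T hT
    have := interaction_image (fun j => m * v j) v id Function.injective_id
      (fun p => p.2 % v p.1) hT (fun p _ => Nat.mod_lt _ (hv0 p.1))
    simpa [hfA] using this
  -- for a t-way interaction, the S-filter has exactly lam elements
  have hfilterS : ∀ T : Finset (Fin k × ℕ), IsInteraction (fun j => m * v j) t T →
      (S.filter (fun x => x ∈ rho D (T.image fD))).card = lam := by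
    intro T hT
    have hTD' := hTD t T hT
    have hlast : Fin.last k ∉ (T.image fD).image Prod.fst := by
      intro h
      simp only [Finset.mem_image] at h
      obtain ⟨q, ⟨p, hp, rfl⟩, hq⟩ := h
      simp only [hfD] at hq
      exact absurd hq (Fin.castSucc_lt_last p.1).ne
    have hins : ∀ c, c < lam → IsInteraction (fun _ : Fin (k+1) => m) (t+1)
        (insert (Fin.last k, c) (T.image fD)) := by
      intro c hc
      have hnotmem : (Fin.last k, c) ∉ T.image fD :=
        fun h => hlast (Finset.mem_image_of_mem _ h)
      refine ⟨by rw [Finset.card_insert_of_notMem hnotmem, hTD'.1], ?_, ?_⟩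
      · rw [Finset.image_insert, Finset.card_insert_of_notMem hlast, hTD'.2.1]
      · intro p hp
        rcases Finset.mem_insert.mp hp with h | h
        · subst h; exact lt_of_lt_of_le hc hlm
        · exact hTD'.2.2 p h
    have hpart : S.filter (fun x => x ∈ rho D (T.image fD)) =
        (Finset.range lam).biUnion
          (fun c => rho D (insert (Fin.last k, c) (T.image fD))) := by
      ext x
      simp only [Finset.mem_filter, hS, Finset.mem_univ, true_and,
        Finset.mem_biUnion, Finset.mem_range, mem_rho]
      constructor
      · rintro ⟨hx, hcov⟩
        refine ⟨D x (Fin.last k), hx, ?_⟩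
        intro p hp
        rcases Finset.mem_insert.mp hp with h | h
        · subst h; rfl
        · exact hcov p h
      · rintro ⟨c, hc, hcov⟩
        have h1 := hcov (Fin.last k, c) (Finset.mem_insert_self _ _)
        simp only at h1
        exact ⟨by omega, fun p hp => hcov p (Finset.mem_insert_of_mem hp)⟩
    rw [hpart, Finset.card_biUnion]
    · have h1 : ∀ c ∈ Finset.range lam,
          (rho D (insert (Fin.last k, c) (T.image fD))).card = 1 := by
        intro c hc
        exact hD.2 _ (hins c (Finset.mem_range.mp hc))
      rw [Finset.sum_congr rfl h1, Finset.sum_const, Finset.card_range,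
        smul_eq_mul, mul_one]
    · intro x hx y hy hxy
      rw [Function.onFun, Finset.disjoint_left]
      intro r hr hr'
      rw [mem_rho] at hr hr'
      have h1 := hr (Fin.last k, x) (Finset.mem_insert_self _ _)
      have h2 := hr' (Fin.last k, y) (Finset.mem_insert_self _ _)
      simp only at h1 h2; omega
  -- lower bound for t-way interactions
  have hlow : ∀ T : Finset (Fin k × ℕ), IsInteraction (fun j => m * v j) t T →
      lam * (d + 1) ≤ (rho C T).card := by
    intro T hT
    rw [hcardrho T, hfilterS T hT]
    exact Nat.mul_le_mul_left lam (hA.2 _ (hTA t T hT))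
  -- intersection bound
  have hint : ∀ T T' : Finset (Fin k × ℕ),
      IsInteraction (fun j => m * v j) t T → IsInteraction (fun j => m * v j) t T' →
      T ≠ T' → (rho C T ∩ rho C T').card ≤ 1 := by
    intro T T' hT hT' hne
    rcases Finset.eq_empty_or_nonempty (rho C T ∩ rho C T') with h | ⟨r0, hr0⟩
    · simp [h]
    have hr0T : r0 ∈ rho C T := (Finset.mem_inter.mp hr0).1
    have hr0T' : r0 ∈ rho C T' := (Finset.mem_inter.mp hr0).2
    rw [mem_rho] at hr0T hr0T'
    have hnotsub : ¬ T' ⊆ T := by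
      intro h
      exact hne (Finset.eq_of_subset_of_card_le h (le_of_eq (hT.1.trans hT'.1.symm))).symm
    obtain ⟨p, hpT', hpT⟩ := Finset.not_subset.mp hnotsub
    have hp1 : p.1 ∉ T.image Prod.fst := by
      intro h
      obtain ⟨q, hq, hq1⟩ := Finset.mem_image.mp h
      have h1 := hr0T q hq
      have h2 := hr0T' p hpT'
      have h3 : q.2 = p.2 := by rw [← h1, ← h2, hq1]
      have h4 : q = p := Prod.ext_iff.mpr ⟨hq1, h3⟩
      exact hpT (h4 ▸ hq)
    have hpnotT : p ∉ T := fun h => hp1 (Finset.mem_image_of_mem _ h)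
    set Te : Finset (Fin k × ℕ) := insert p T with hTe
    have hTei : IsInteraction (fun j => m * v j) (t+1) Te := by
      refine ⟨by rw [hTe, Finset.card_insert_of_notMem hpnotT, hT.1], ?_, ?_⟩
      · rw [hTe, Finset.image_insert, Finset.card_insert_of_notMem hp1, hT.2.1]
      · intro q hq
        rcases Finset.mem_insert.mp hq with h | h
        · rw [h]; exact hT'.2.2 p hpT'
        · exact hT.2.2 q h
    have hsub : rho C T ∩ rho C T' ⊆ rho C Te := by
      intro r hr
      have h1 := (Finset.mem_inter.mp hr).1
      have h2 := (Finset.mem_inter.mp hr).2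
      rw [mem_rho] at h1 h2 ⊢
      intro q hq
      rcases Finset.mem_insert.mp hq with h | h
      · rw [h]; exact h2 p hpT'
      · exact h1 q h
    calc (rho C T ∩ rho C T').card ≤ (rho C Te).card := Finset.card_le_card hsub
      _ = (S.filter (fun x => x ∈ rho D (Te.image fD))).card *
          (rho A (Te.image fA)).card := hcardrho Te
      _ ≤ 1 * 1 := by
          apply Nat.mul_le_mul
          · have hsub2 : S.filter (fun x => x ∈ rho D (Te.image fD)) ⊆
                rho D (Te.image fD) := fun x hx => (Finset.mem_filter.mp hx).2
            calc (S.filter (fun x => x ∈ rho D (Te.image fD))).card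
                ≤ (rho D (Te.image fD)).card := Finset.card_le_card hsub2
              _ = 1 := hD.2 _ (hTD (t+1) Te hTei)
          · exact hSS _ (hTA (t+1) Te hTei)
      _ = 1 := by norm_num
  -- assemble the DTA
  refine ⟨C, ?_, ?_⟩
  · -- IsArray
    intro r j
    have h1 : D ((e r).1 : Fin (m ^ (t+1))) j.castSucc < m := hD.1 _ _
    have h2 : A (e r).2 j < v j := hA.1 _ _
    simp only [hCdef]
    calc v j * D ((e r).1 : Fin (m ^ (t+1))) j.castSucc + A (e r).2 j
        < v j * (D ((e r).1 : Fin (m ^ (t+1))) j.castSucc + 1) := by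
          rw [Nat.mul_succ]; omega
      _ ≤ v j * m := Nat.mul_le_mul_left _ (by omega)
      _ = m * v j := Nat.mul_comm _ _
  · -- detecting property
    intro T hT Ts hTscard hTs'
    constructor
    · intro hsub
      by_contra hTnotin
      have h1 : rho C T ⊆ Ts.biUnion (fun T' => rho C T ∩ rho C T') := by
        intro r hr
        obtain ⟨T', hT'mem, hrT'⟩ := Finset.mem_sup.mp (hsub hr)
        exact Finset.mem_biUnion.mpr ⟨T', hT'mem, Finset.mem_inter.mpr ⟨hr, hrT'⟩⟩
      have h2 : (rho C T).card ≤ ∑ T' ∈ Ts, (rho C T ∩ rho C T').card :=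
        le_trans (Finset.card_le_card h1) Finset.card_biUnion_le
      have h3 : ∑ T' ∈ Ts, (rho C T ∩ rho C T').card ≤ Ts.card • 1 := by
        refine Finset.sum_le_card_nsmul _ _ _ ?_
        intro T' hT'mem
        exact hint T T' hT (hTs' T' hT'mem) (fun h => hTnotin (h ▸ hT'mem))
      simp only [smul_eq_mul, mul_one, hTscard] at h3
      have h4 := hlow T hT
      have h5 : 0 < lam * (d + 1) := Nat.mul_pos (by omega) (by omega)
      omega
    · intro hTin
      intro r hr
      exact Finset.mem_sup.mpr ⟨T, hTin, hr⟩
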